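/- For every ħ>0 and every integer n≥1, the eigenvalues satisfy the interlacing bounds ℰ_{n−1;ħ} < E_{n;ħ} < ℰ_{n+1;ħ}. -/

import Mathlib

open Real Set


lemma invGamma_eq (s : ℝ) (hs : s < 1) :
    (Real.Gamma s)⁻¹ = Real.Gamma (1 - s) * Real.sin (π * s) / π := by
  by_cases h : Real.sin (π * s) = 0
  · obtain ⟨n, hn⟩ := Real.sin_eq_zero_iff.mp h
    have hsn : s = n := by
      have hπ : (π:ℝ) ≠ 0 := Real.pi_ne_zero
      have := mul_right_cancel₀ hπ (by linarith [hn] : (n:ℝ) * π = s * π)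
      linarith [this]
    have hn0 : n ≤ 0 := by
      have : (n:ℝ) < 1 := hsn ▸ hs
      exact_mod_cast Int.lt_add_one_iff.mp (by exact_mod_cast this)
    have hΓ : Real.Gamma s = 0 := by
      rw [Real.Gamma_eq_zero_iff]
      refine ⟨(-n).toNat, ?_⟩
      rw [hsn]
      have : ((-n).toNat : ℤ) = -n := Int.toNat_of_nonneg (by omega)
      have h2 : ((((-n).toNat : ℕ)):ℝ) = ((-n : ℤ) : ℝ) := by exact_mod_cast this
      push_cast at h2 ⊢
      linarith
    rw [hΓ, h]; simp
  · have key := Real.Gamma_mul_Gamma_one_sub s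
    have hΓ : Real.Gamma s ≠ 0 := by
      intro h0
      rw [h0, zero_mul] at key
      exact (div_ne_zero Real.pi_ne_zero h) key.symm
    have hπ : (π:ℝ) ≠ 0 := Real.pi_ne_zero
    field_simp
    have key2 : Real.Gamma s * Real.Gamma (1-s) * Real.sin (π * s) = π := by
      rw [key]; field_simp
    rw [mul_comm π s] at key2; linarith [key2]
    

lemma theta_bound (θ : ℝ → ℝ) (hθc : ContinuousOn θ (Ici 0)) (hθ0 : θ 0 = -(π/2))
    (hθ : ∀ z ≥ (0:ℝ), ∃ r > (0:ℝ),
      r * Real.cos (θ z) = Real.sqrt z * (Real.Gamma (3/4 - z))⁻¹ ∧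
      r * Real.sin (θ z) = -(Real.Gamma (1/4 - z))⁻¹) :
    ∀ z ≥ (0:ℝ), -(π/2) < θ z - (π*z - π/4) ∧ θ z - (π*z - π/4) < π/2 := by
  have key : ∀ z ≥ (0:ℝ), 0 < Real.cos (θ z - (π*z - π/4)) := by
    intro z hz
    obtain ⟨r, hr, hx, hy⟩ := hθ z hz
    have h34 : (Real.Gamma (3/4 - z))⁻¹
        = Real.Gamma (1/4 + z) * Real.cos (π*z - π/4) / π := by
      rw [invGamma_eq (3/4 - z) (by linarith)]
      have e1 : (1 : ℝ) - (3/4 - z) = 1/4 + z := by ring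
      have e2 : π * (3/4 - z) = π/2 - (π*z - π/4) := by ring
      rw [e1, e2, Real.sin_pi_div_two_sub]
    have h14 : (Real.Gamma (1/4 - z))⁻¹
        = -(Real.Gamma (3/4 + z) * Real.sin (π*z - π/4) / π) := by
      rw [invGamma_eq (1/4 - z) (by linarith)]
      have e1 : (1 : ℝ) - (1/4 - z) = 3/4 + z := by ring
      have e2 : π * (1/4 - z) = -(π*z - π/4) := by ring
      rw [e1, e2, Real.sin_neg]
      ring
    have hcs : r * Real.cos (θ z - (π*z - π/4))
        = (Real.sqrt z * Real.Gamma (1/4 + z) * (Real.cos (π*z - π/4))^2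
          + Real.Gamma (3/4 + z) * (Real.sin (π*z - π/4))^2) / π := by
      rw [Real.cos_sub]
      have : r * (Real.cos (θ z) * Real.cos (π*z - π/4)
          + Real.sin (θ z) * Real.sin (π*z - π/4))
          = (r * Real.cos (θ z)) * Real.cos (π*z - π/4)
          + (r * Real.sin (θ z)) * Real.sin (π*z - π/4) := by ring
      rw [this, hx, hy, h34, h14]
      ring
    have hA : 0 ≤ Real.sqrt z * Real.Gamma (1/4 + z) := by
      have := Real.Gamma_pos_of_pos (show (0:ℝ) < 1/4 + z by linarith)
      positivity
    have hB : 0 < Real.Gamma (3/4 + z) := Real.Gamma_pos_of_pos (by linarith)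
    have hpos : 0 < Real.sqrt z * Real.Gamma (1/4 + z) * (Real.cos (π*z - π/4))^2
          + Real.Gamma (3/4 + z) * (Real.sin (π*z - π/4))^2 := by
      rcases eq_or_lt_of_le hz with hz0 | hz0
      · have hs : Real.sin (π*z - π/4) ≠ 0 := by
          rw [← hz0]
          have : π * 0 - π/4 = -(π/4) := by ring
          rw [this, Real.sin_neg]
          have := Real.sin_pos_of_pos_of_lt_pi (x := π/4) (by positivity)
            (by linarith [Real.pi_pos])
          intro hc; nlinarith
        have h2 : 0 < Real.Gamma (3/4 + z) * (Real.sin (π*z - π/4))^2 := by positivity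
        nlinarith [sq_nonneg (Real.cos (π*z - π/4))]
      · have hA' : 0 < Real.sqrt z * Real.Gamma (1/4 + z) := by
          have := Real.Gamma_pos_of_pos (show (0:ℝ) < 1/4 + z by linarith)
          have := Real.sqrt_pos.mpr hz0
          positivity
        by_cases hc : Real.cos (π*z - π/4) = 0
        · have hs2 : (Real.sin (π*z - π/4))^2 = 1 := by
            have := Real.sin_sq_add_cos_sq (π*z - π/4)
            nlinarith
          rw [hc, hs2]; nlinarith
        · have hc2 : 0 < (Real.cos (π*z - π/4))^2 := by positivity
          nlinarith [sq_nonneg (Real.sin (π*z - π/4))]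
    have := div_pos hpos Real.pi_pos
    rw [← hcs] at this
    by_contra hcon
    push_neg at hcon
    nlinarith
  -- now IVT argument
  set g : ℝ → ℝ := fun z => θ z - (π*z - π/4) with hgdef
  have hgc : ContinuousOn g (Ici 0) :=
    hθc.sub ((continuous_const.mul continuous_id).sub continuous_const).continuousOn
  have hg0 : g 0 = -(π/4) := by simp [hgdef, hθ0]; ring
  intro z hz
  constructor
  · by_contra hcon
    push_neg at hcon
    have hsub : Icc (0:ℝ) z ⊆ Ici 0 := fun w hw => hw.1
    have hiv := intermediate_value_Icc' hz (hgc.mono hsub)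
    have hmem : -(π/2) ∈ Icc (g z) (g 0) := by
      constructor
      · exact hcon
      · rw [hg0]; linarith [Real.pi_pos]
    obtain ⟨w, hw, hgw⟩ := hiv hmem
    have := key w hw.1
    simp only [hgdef] at hgw
    rw [hgw] at this
    simp at this
  · by_contra hcon
    push_neg at hcon
    have hsub : Icc (0:ℝ) z ⊆ Ici 0 := fun w hw => hw.1
    have hiv := intermediate_value_Icc hz (hgc.mono hsub)
    have hmem : π/2 ∈ Icc (g 0) (g z) := by
      constructor
      · rw [hg0]; linarith [Real.pi_pos]
      · exact hcon
    obtain ⟨w, hw, hgw⟩ := hiv hmem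
    have := key w hw.1
    simp only [hgdef] at hgw
    rw [hgw] at this
    rw [Real.cos_pi_div_two] at this
    exact lt_irrefl 0 this

set_option maxHeartbeats 1000000 in

/-- For every `ħ > 0` (written `hb`) and every `n ≥ 1`, the eigenvalues
interlace with the Bohr–Sommerfeld values: `ℰ_{n-1;ħ} < E_{n;ħ} < ℰ_{n+1;ħ}`.
Here `Eeig hb n` is the unique `E > 0` with
`√(2m)·ℓ·√E/ħ + θ(E/(2ħω₋)) + θ(E/(2ħω₊)) = πn`, and `calE hb n = S⁻¹(2πħ(n+1/2))`
where `S(E) = 2√(2m)ℓ√E + (π/ω₋+π/ω₊)E`. `ωm, ωp` stand for `ω₋, ω₊`. -/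
theorem stmt2
    (m ℓ ωm ωp : ℝ) (hm : 0 < m) (hℓ : 0 ≤ ℓ) (hωm : 0 < ωm) (hωp : 0 < ωp)
    (hne : ℓ = 0 → ωm ≠ ωp)
    (θ : ℝ → ℝ)
    (hθc : ContinuousOn θ (Ici 0)) (hθ0 : θ 0 = -(π/2))
    (hθ : ∀ z ≥ (0:ℝ), ∃ r > (0:ℝ),
      r * Real.cos (θ z) = Real.sqrt z * (Real.Gamma (3/4 - z))⁻¹ ∧
      r * Real.sin (θ z) = -(Real.Gamma (1/4 - z))⁻¹)
    (Eeig : ℝ → ℕ → ℝ)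
    (hEeig : ∀ hb > (0:ℝ), ∀ n : ℕ, 0 < Eeig hb n ∧
      Real.sqrt (2*m) * ℓ * Real.sqrt (Eeig hb n) / hb
        + θ (Eeig hb n / (2*hb*ωm)) + θ (Eeig hb n / (2*hb*ωp)) = π * n)
    (calE : ℝ → ℕ → ℝ)
    (hcalE : ∀ hb > (0:ℝ), ∀ n : ℕ, 0 ≤ calE hb n ∧
      2 * Real.sqrt (2*m) * ℓ * Real.sqrt (calE hb n) + (π/ωm + π/ωp) * calE hb n
        = 2*π*hb*(n + 1/2)) :
    ∀ hb > (0:ℝ), ∀ n : ℕ, 1 ≤ n →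
      calE hb (n-1) < Eeig hb n ∧ Eeig hb n < calE hb (n+1) := by
  intro hb hhb n hn
  have hθb := theta_bound θ hθc hθ0 hθ
  obtain ⟨hE, heq⟩ := hEeig hb hhb n
  set E := Eeig hb n with hEdef
  set K := Real.sqrt (2*m) * ℓ with hKdef
  have hK : 0 ≤ K := by positivity
  have hbne : hb ≠ 0 := ne_of_gt hhb
  have hωmne : ωm ≠ 0 := ne_of_gt hωm
  have hωpne : ωp ≠ 0 := ne_of_gt hωp
  set zm := E / (2*hb*ωm) with hzmdef
  set zp := E / (2*hb*ωp) with hzpdef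
  have hzm : (0:ℝ) ≤ zm := by positivity
  have hzp : (0:ℝ) ≤ zp := by positivity
  obtain ⟨hm1, hm2⟩ := hθb zm hzm
  obtain ⟨hp1, hp2⟩ := hθb zp hzp
  -- G E = 2*hb*(π*n + (π*zm - θ zm) + (π*zp - θ zp))
  have hem : (π/ωm) * E = 2*hb*(π*zm) := by
    rw [hzmdef]; field_simp
  have hep : (π/ωp) * E = 2*hb*(π*zp) := by
    rw [hzpdef]; field_simp
  have hKE : 2 * K * Real.sqrt E = 2*hb*(π*n - θ zm - θ zp) := by
    have h1 : K * Real.sqrt E / hb = π*n - θ zm - θ zp := by linarith [heq]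
    have h2 : K * Real.sqrt E = hb * (π*n - θ zm - θ zp) := by
      rw [← h1]; field_simp
    linarith [h2]
  have hGE : 2 * K * Real.sqrt E + (π/ωm + π/ωp) * E
      = 2*hb*(π*n + (π*zm - θ zm) + (π*zp - θ zp)) := by
    have : (π/ωm + π/ωp) * E = (π/ωm)*E + (π/ωp)*E := by ring
    rw [this, hem, hep, hKE]; ring
  -- bounds on G E
  have hang : π*(n:ℝ) - π/2 < π*n + (π*zm - θ zm) + (π*zp - θ zp) ∧
      π*n + (π*zm - θ zm) + (π*zp - θ zp) < π*(n:ℝ) + 3*π/2 := by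
    constructor <;> linarith
  have hGlb : 2*π*hb*((n:ℝ) - 1/2) < 2 * K * Real.sqrt E + (π/ωm + π/ωp) * E := by
    rw [hGE]; nlinarith [hang.1, hhb]
  have hGub : 2 * K * Real.sqrt E + (π/ωm + π/ωp) * E < 2*π*hb*((n:ℝ) + 3/2) := by
    rw [hGE]; nlinarith [hang.2, hhb]
  -- monotonicity of G
  have mono : ∀ a b : ℝ, 0 ≤ a → a ≤ b →
      2 * K * Real.sqrt a + (π/ωm + π/ωp) * a ≤
      2 * K * Real.sqrt b + (π/ωm + π/ωp) * b := by
    intro a b ha hab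
    have h1 : Real.sqrt a ≤ Real.sqrt b := Real.sqrt_le_sqrt hab
    have h2 := mul_le_mul_of_nonneg_left h1 (by positivity : (0:ℝ) ≤ 2*K)
    have hc : (0:ℝ) ≤ π/ωm + π/ωp := by positivity
    have h3 := mul_le_mul_of_nonneg_left hab hc
    linarith
  -- calE values
  obtain ⟨hC1nn, heq1⟩ := hcalE hb hhb (n-1)
  obtain ⟨hC2nn, heq2⟩ := hcalE hb hhb (n+1)
  have hcast1 : (((n-1:ℕ)):ℝ) = (n:ℝ) - 1 := by
    rw [Nat.cast_sub hn]; simp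
  have hcast2 : (((n+1:ℕ)):ℝ) = (n:ℝ) + 1 := by push_cast; ring
  rw [hcast1] at heq1
  rw [hcast2] at heq2
  constructor
  · by_contra hcon
    push_neg at hcon
    have := mono E (calE hb (n-1)) (le_of_lt hE) hcon
    have hG1 : 2 * K * Real.sqrt (calE hb (n-1)) + (π/ωm + π/ωp) * calE hb (n-1)
        = 2*π*hb*((n:ℝ) - 1/2) := by
      linear_combination heq1
    linarith
  · by_contra hcon
    push_neg at hcon
    have := mono (calE hb (n+1)) E hC2nn hcon
    have hG2 : 2 * K * Real.sqrt (calE hb (n+1)) + (π/ωm + π/ωp) * calE hb (n+1)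
        = 2*π*hb*((n:ℝ) + 3/2) := by
      linear_combination heq2
    linarith
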